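/- Let k be a field. Let V be the k-vector space with basis e_1, …, e_12 and let T : V → V be the k-linear map with T(e_i) = 0 for i ∈ {1, 7, 11} and T(e_i) = e_{i−1} for all other i (so (V,T) is nilpotent of type given by the partition (6,4,2)). For c ∈ k, let U_c ⊆ V be the subspace spanned by the three elements e_3 + e_8, e_11 − e_8 and c·e_4 + (c−1)·e_9 + e_12 together with all their images under the powers of T. Then each triple X_c = (V, U_c, T) is an indecomposable object of S_k(6) with dimension pair (12, 6), and the X_c are pairwise non-isomorphic: X_c ≅ X_{c'} implies c = c'. -/

import Mathlib

universe u

noncomputable section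

variable (k : Type u) [Field k]

/-- The nilpotent operator `T` on `V = k^12` (basis `e₁, …, e₁₂`, here 0-indexed as
`e 0, …, e 11`) with `T e_i = 0` for `i ∈ {1,7,11}` (0-indexed `{0,6,10}`) and
`T e_i = e_{i−1}` otherwise; `T` is given by the partition `(6,4,2)`. -/
def Tmap : (Fin 12 → k) →ₗ[k] (Fin 12 → k) where
  toFun v j :=
    if h : (j : ℕ) + 1 < 12 then
      if (j : ℕ) = 5 ∨ (j : ℕ) = 9 then 0 else v ⟨(j : ℕ) + 1, h⟩
    else 0
  map_add' v w := by
    funext j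
    by_cases h : (j : ℕ) + 1 < 12
    · by_cases h' : (j : ℕ) = 5 ∨ (j : ℕ) = 9 <;> simp [h, h']
    · simp [h]
  map_smul' c v := by
    funext j
    by_cases h : (j : ℕ) + 1 < 12
    · by_cases h' : (j : ℕ) = 5 ∨ (j : ℕ) = 9 <;> simp [h, h']
    · simp [h]

/-- The generator `e₃ + e₈` (1-indexed), i.e. `e 2 + e 7` (0-indexed). -/
def g₁ : Fin 12 → k := Pi.single 2 1 + Pi.single 7 1

/-- The generator `e₁₁ − e₈` (1-indexed), i.e. `e 10 − e 7` (0-indexed). -/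
def g₂ : Fin 12 → k := Pi.single 10 1 - Pi.single 7 1

/-- The generator `c·e₄ + (c−1)·e₉ + e₁₂` (1-indexed). -/
def g₃ (c : k) : Fin 12 → k :=
  c • (Pi.single 3 1 : Fin 12 → k) + (c - 1) • (Pi.single 8 1 : Fin 12 → k) +
    Pi.single 11 1

/-- The subspace `U_c`, spanned by the three generators together with all their images
under the powers of `T`. -/
def Uc (c : k) : Submodule k (Fin 12 → k) :=
  Submodule.span k {x | ∃ m : ℕ,
    x = (Tmap k ^ m) (g₁ k) ∨ x = (Tmap k ^ m) (g₂ k) ∨ x = (Tmap k ^ m) (g₃ k c)}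

/-- Indecomposability of a triple `(V,U,T)`. -/
def IndecTriple {V : Type u} [AddCommGroup V] [Module k V]
    (U : Submodule k V) (T : V →ₗ[k] V) : Prop :=
  (∃ v : V, v ≠ 0) ∧
    ¬∃ V₁ V₂ : Submodule k V,
        V₁ ≠ ⊥ ∧ V₂ ≠ ⊥ ∧ IsCompl V₁ V₂ ∧
          (∀ x ∈ V₁, T x ∈ V₁) ∧ (∀ x ∈ V₂, T x ∈ V₂) ∧
            U = U ⊓ V₁ ⊔ U ⊓ V₂

/-- Isomorphism of triples `(V,U,T) ≅ (W,U',T')`. -/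
def TripleIso {V W : Type u} [AddCommGroup V] [Module k V] [AddCommGroup W] [Module k W]
    (U : Submodule k V) (T : V →ₗ[k] V) (U' : Submodule k W) (T' : W →ₗ[k] W) : Prop :=
  ∃ e : V ≃ₗ[k] W, (∀ v, e (T v) = T' (e v)) ∧ U.map e.toLinearMap = U'

-- coordinate lemmas for Tmap
@[simp] lemma Tc0 (x : Fin 12 → k) : Tmap k x 0 = x 1 := rfl
@[simp] lemma Tc1 (x : Fin 12 → k) : Tmap k x 1 = x 2 := rfl
@[simp] lemma Tc2 (x : Fin 12 → k) : Tmap k x 2 = x 3 := rfl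
@[simp] lemma Tc3 (x : Fin 12 → k) : Tmap k x 3 = x 4 := rfl
@[simp] lemma Tc4 (x : Fin 12 → k) : Tmap k x 4 = x 5 := rfl
@[simp] lemma Tc5 (x : Fin 12 → k) : Tmap k x 5 = 0 := rfl
@[simp] lemma Tc6 (x : Fin 12 → k) : Tmap k x 6 = x 7 := rfl
@[simp] lemma Tc7 (x : Fin 12 → k) : Tmap k x 7 = x 8 := rfl
@[simp] lemma Tc8 (x : Fin 12 → k) : Tmap k x 8 = x 9 := rfl
@[simp] lemma Tc9 (x : Fin 12 → k) : Tmap k x 9 = 0 := rfl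
@[simp] lemma Tc10 (x : Fin 12 → k) : Tmap k x 10 = x 11 := rfl
@[simp] lemma Tc11 (x : Fin 12 → k) : Tmap k x 11 = 0 := rfl

/-- standard basis vectors -/
def SE (i : Fin 12) : Fin 12 → k := Pi.single i 1

lemma T6 : Tmap k ^ 6 = 0 := by
  apply LinearMap.ext; intro x
  show (Tmap k) ((Tmap k) ((Tmap k) ((Tmap k) ((Tmap k) ((Tmap k) x))))) = 0
  funext j; fin_cases j <;> simp

-- T on basis vectors
lemma TS1 : Tmap k (SE k 1) = SE k 0 := by
  funext j; fin_cases j <;> simp (config := { decide := true }) [SE, Pi.single_apply]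
lemma TS2 : Tmap k (SE k 2) = SE k 1 := by
  funext j; fin_cases j <;> simp (config := { decide := true }) [SE, Pi.single_apply]
lemma TS3 : Tmap k (SE k 3) = SE k 2 := by
  funext j; fin_cases j <;> simp (config := { decide := true }) [SE, Pi.single_apply]
lemma TS4 : Tmap k (SE k 4) = SE k 3 := by
  funext j; fin_cases j <;> simp (config := { decide := true }) [SE, Pi.single_apply]
lemma TS5 : Tmap k (SE k 5) = SE k 4 := by
  funext j; fin_cases j <;> simp (config := { decide := true }) [SE, Pi.single_apply]
lemma TS6 : Tmap k (SE k 6) = 0 := by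
  funext j; fin_cases j <;> simp (config := { decide := true }) [SE, Pi.single_apply]
lemma TS7 : Tmap k (SE k 7) = SE k 6 := by
  funext j; fin_cases j <;> simp (config := { decide := true }) [SE, Pi.single_apply]
lemma TS8 : Tmap k (SE k 8) = SE k 7 := by
  funext j; fin_cases j <;> simp (config := { decide := true }) [SE, Pi.single_apply]
lemma TS9 : Tmap k (SE k 9) = SE k 8 := by
  funext j; fin_cases j <;> simp (config := { decide := true }) [SE, Pi.single_apply]
lemma TS10 : Tmap k (SE k 10) = 0 := by
  funext j; fin_cases j <;> simp (config := { decide := true }) [SE, Pi.single_apply]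
lemma TS11 : Tmap k (SE k 11) = SE k 10 := by
  funext j; fin_cases j <;> simp (config := { decide := true }) [SE, Pi.single_apply]

/-- explicit description of `Uc` by linear equations -/
def UK (c : k) : Submodule k (Fin 12 → k) where
  carrier := {x | x 4 = 0 ∧ x 5 = 0 ∧ x 9 = 0 ∧ x 3 = c * x 11 ∧
    x 8 = (c - 1) * x 11 ∧ x 2 = x 7 + x 10}
  add_mem' := by
    rintro x y ⟨h1, h2, h3, h4, h5, h6⟩ ⟨h1', h2', h3', h4', h5', h6'⟩
    refine ⟨?_, ?_, ?_, ?_, ?_, ?_⟩ <;> simp only [Pi.add_apply] <;>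
      [skip; skip; skip; rw [h4, h4']; rw [h5, h5']; rw [h6, h6']] <;>
      first
        | (rw [h1, h1', add_zero])
        | (rw [h2, h2', add_zero])
        | (rw [h3, h3', add_zero])
        | ring
  zero_mem' := by
    refine ⟨rfl, rfl, rfl, ?_, ?_, ?_⟩ <;> simp
  smul_mem' := by
    rintro t x ⟨h1, h2, h3, h4, h5, h6⟩
    refine ⟨?_, ?_, ?_, ?_, ?_, ?_⟩ <;> simp only [Pi.smul_apply, smul_eq_mul] <;>
      [rw [h1, mul_zero]; rw [h2, mul_zero]; rw [h3, mul_zero];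
        rw [h4]; rw [h5]; rw [h6]] <;> ring

lemma mem_UK {c : k} {x : Fin 12 → k} :
    x ∈ UK k c ↔ (x 4 = 0 ∧ x 5 = 0 ∧ x 9 = 0 ∧ x 3 = c * x 11 ∧
      x 8 = (c - 1) * x 11 ∧ x 2 = x 7 + x 10) := Iff.rfl

lemma UK_Tinv {c : k} {x : Fin 12 → k} (hx : x ∈ UK k c) : Tmap k x ∈ UK k c := by
  obtain ⟨h1, h2, h3, h4, h5, h6⟩ := hx
  refine ⟨h2, rfl, rfl, ?_, ?_, ?_⟩ <;> simp only [Tc0, Tc1, Tc2, Tc3, Tc4, Tc5, Tc6, Tc7,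
    Tc8, Tc9, Tc10, Tc11]
  · rw [h1, mul_zero]
  · rw [h3, mul_zero]
  · rw [h4, h5]; ring

lemma g₁_mem_UK (c : k) : g₁ k ∈ UK k c := by
  refine ⟨?_, ?_, ?_, ?_, ?_, ?_⟩ <;>
    simp (config := { decide := true }) [g₁, Pi.single_apply]

lemma g₂_mem_UK (c : k) : g₂ k ∈ UK k c := by
  refine ⟨?_, ?_, ?_, ?_, ?_, ?_⟩ <;>
    simp (config := { decide := true }) [g₂, Pi.single_apply]

lemma g₃_mem_UK (c : k) : g₃ k c ∈ UK k c := by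
  refine ⟨?_, ?_, ?_, ?_, ?_, ?_⟩ <;>
    simp (config := { decide := true }) [g₃, Pi.single_apply]

lemma pow_mem_UK {c : k} {g : Fin 12 → k} (hg : g ∈ UK k c) (m : ℕ) :
    (Tmap k ^ m) g ∈ UK k c := by
  induction m with
  | zero => simpa using hg
  | succ n ih =>
      rw [pow_succ']
      exact UK_Tinv k (by simpa using ih)

lemma Uc_le_UK (c : k) : Uc k c ≤ UK k c := by
  rw [Uc, Submodule.span_le]
  rintro x ⟨m, hm | hm | hm⟩ <;> subst hm
  · exact pow_mem_UK k (g₁_mem_UK k c) m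
  · exact pow_mem_UK k (g₂_mem_UK k c) m
  · exact pow_mem_UK k (g₃_mem_UK k c) m

lemma g₁_eq : g₁ k = SE k 2 + SE k 7 := rfl
lemma g₂_eq : g₂ k = SE k 10 - SE k 7 := rfl

lemma Tg₁ : Tmap k (g₁ k) = SE k 1 + SE k 6 := by
  rw [g₁_eq, map_add, TS2, TS7]
lemma T2g₁ : Tmap k (Tmap k (g₁ k)) = SE k 0 := by
  rw [Tg₁, map_add, TS1, TS6, add_zero]
lemma Tg₂ : Tmap k (g₂ k) = -SE k 6 := by
  rw [g₂_eq, map_sub, TS10, TS7, zero_sub]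

lemma mem0 (c : k) : SE k 0 ∈ Uc k c :=
  Submodule.subset_span ⟨2, Or.inl (by rw [pow_two, Module.End.mul_apply, T2g₁])⟩
lemma mem1 (c : k) : SE k 1 + SE k 6 ∈ Uc k c :=
  Submodule.subset_span ⟨1, Or.inl (by rw [pow_one, Tg₁])⟩
lemma mem2 (c : k) : g₁ k ∈ Uc k c :=
  Submodule.subset_span ⟨0, Or.inl (by rw [pow_zero, Module.End.one_apply])⟩
lemma mem3 (c : k) : SE k 6 ∈ Uc k c := by
  have h : Tmap k (g₂ k) ∈ Uc k c :=
    Submodule.subset_span ⟨1, Or.inr (Or.inl (by rw [pow_one]))⟩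
  have := (Uc k c).neg_mem h
  rwa [Tg₂, neg_neg] at this
lemma mem4 (c : k) : g₂ k ∈ Uc k c :=
  Submodule.subset_span ⟨0, Or.inr (Or.inl (by rw [pow_zero, Module.End.one_apply]))⟩
lemma mem5 (c : k) : g₃ k c ∈ Uc k c :=
  Submodule.subset_span ⟨0, Or.inr (Or.inr (by rw [pow_zero, Module.End.one_apply]))⟩

lemma decomp {c : k} {x : Fin 12 → k} (hx : x ∈ UK k c) :
    x = x 0 • SE k 0 + x 1 • (SE k 1 + SE k 6) + x 2 • g₁ k + (x 6 - x 1) • SE k 6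
      + x 10 • g₂ k + x 11 • g₃ k c := by
  obtain ⟨h1, h2, h3, h4, h5, h6⟩ := hx
  funext j
  fin_cases j <;>
    simp (config := { decide := true }) [SE, g₁, g₂, g₃, Pi.single_apply] <;>
    first
      | linear_combination
      | linear_combination h1
      | linear_combination h2
      | linear_combination h3
      | linear_combination h4
      | linear_combination h5
      | linear_combination h6
      | linear_combination -h1
      | linear_combination -h2
      | linear_combination -h3
      | linear_combination -h4
      | linear_combination -h5
      | linear_combination -h6

lemma UK_le_Uc (c : k) : UK k c ≤ Uc k c := by
  intro x hx
  rw [decomp k hx]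
  exact add_mem (add_mem (add_mem (add_mem (add_mem
    (Submodule.smul_mem _ _ (mem0 k c)) (Submodule.smul_mem _ _ (mem1 k c)))
    (Submodule.smul_mem _ _ (mem2 k c))) (Submodule.smul_mem _ _ (mem3 k c)))
    (Submodule.smul_mem _ _ (mem4 k c))) (Submodule.smul_mem _ _ (mem5 k c))

lemma Uc_eq_UK (c : k) : Uc k c = UK k c :=
  le_antisymm (Uc_le_UK k c) (UK_le_Uc k c)

lemma mem_Uc_iff {c : k} {x : Fin 12 → k} :
    x ∈ Uc k c ↔ (x 4 = 0 ∧ x 5 = 0 ∧ x 9 = 0 ∧ x 3 = c * x 11 ∧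
      x 8 = (c - 1) * x 11 ∧ x 2 = x 7 + x 10) := by
  rw [Uc_eq_UK]; exact Iff.rfl

/-- basis family of `Uc` -/
def wf (c : k) : Fin 6 → (Fin 12 → k) := fun i =>
  if i = 0 then SE k 0 else if i = 1 then SE k 1 + SE k 6 else if i = 2 then g₁ k
  else if i = 3 then SE k 6 else if i = 4 then g₂ k else g₃ k c

lemma wf0 (c : k) : wf k c 0 = SE k 0 := rfl
lemma wf1 (c : k) : wf k c 1 = SE k 1 + SE k 6 := rfl
lemma wf2 (c : k) : wf k c 2 = g₁ k := rfl
lemma wf3 (c : k) : wf k c 3 = SE k 6 := rfl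
lemma wf4 (c : k) : wf k c 4 = g₂ k := rfl
lemma wf5 (c : k) : wf k c 5 = g₃ k c := rfl

lemma Uc_eq_span (c : k) : Uc k c = Submodule.span k (Set.range (wf k c)) := by
  apply le_antisymm
  · refine le_trans (Uc_le_UK k c) ?_
    intro x hx
    rw [decomp k hx]
    refine add_mem (add_mem (add_mem (add_mem (add_mem
      (Submodule.smul_mem _ _ ?_) (Submodule.smul_mem _ _ ?_))
      (Submodule.smul_mem _ _ ?_)) (Submodule.smul_mem _ _ ?_))
      (Submodule.smul_mem _ _ ?_)) (Submodule.smul_mem _ _ ?_)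
    exacts [Submodule.subset_span ⟨0, rfl⟩, Submodule.subset_span ⟨1, rfl⟩,
      Submodule.subset_span ⟨2, rfl⟩, Submodule.subset_span ⟨3, rfl⟩,
      Submodule.subset_span ⟨4, rfl⟩, Submodule.subset_span ⟨5, rfl⟩]
  · rw [Submodule.span_le]
    rintro x ⟨i, rfl⟩
    fin_cases i
    exacts [mem0 k c, mem1 k c, mem2 k c, mem3 k c, mem4 k c, mem5 k c]

lemma wf_li (c : k) : LinearIndependent k (wf k c) := by
  rw [Fintype.linearIndependent_iff]
  intro gc hg
  have h0 := congrFun hg 0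
  have h1 := congrFun hg 1
  have h2 := congrFun hg 2
  have h6 := congrFun hg 6
  have h10 := congrFun hg 10
  have h11 := congrFun hg 11
  simp (config := { decide := true })
    [Fin.sum_univ_six, wf0, wf1, wf2, wf3, wf4, wf5, SE, g₁, g₂, g₃, Pi.single_apply]
    at h0 h1 h2 h6 h10 h11
  have hg3 : gc 3 = 0 := by linear_combination h6 - h1
  intro i
  fin_cases i <;>
    first
      | exact h0
      | exact h1
      | exact h2
      | exact hg3
      | exact h10
      | exact h11

lemma finrank_Uc (c : k) : Module.finrank k ↥(Uc k c) = 6 := by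
  rw [Uc_eq_span, finrank_span_eq_card (wf_li k c)]
  simp

lemma hdecomp (x : Fin 12 → k) :
    x = x 0 • SE k 0 + x 1 • SE k 1 + x 2 • SE k 2 + x 3 • SE k 3 + x 4 • SE k 4
      + x 5 • SE k 5 + x 6 • SE k 6 + x 7 • SE k 7 + x 8 • SE k 8 + x 9 • SE k 9
      + x 10 • SE k 10 + x 11 • SE k 11 := by
  funext j
  fin_cases j <;> simp (config := { decide := true }) [SE, Pi.single_apply]

lemma hsingle (i : Fin 12) (t : k) : Pi.single i t = t • SE k i := by
  funext j
  rcases eq_or_ne j i with rfl | hne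
  · simp [SE]
  · simp [SE, Pi.single_eq_of_ne hne]

section Endo

variable {k}
variable (f : (Fin 12 → k) →ₗ[k] (Fin 12 → k))
  (hf : ∀ v, f (Tmap k v) = Tmap k (f v))
include hf

omit hf in
lemma rep (x : Fin 12 → k) :
    f x = x 0 • f (SE k 0) + x 1 • f (SE k 1) + x 2 • f (SE k 2) + x 3 • f (SE k 3)
      + x 4 • f (SE k 4) + x 5 • f (SE k 5) + x 6 • f (SE k 6) + x 7 • f (SE k 7)
      + x 8 • f (SE k 8) + x 9 • f (SE k 9) + x 10 • f (SE k 10) + x 11 • f (SE k 11) := by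
  conv_lhs => rw [hdecomp k x]
  simp only [map_add, map_smul]

lemma fS4 : f (SE k 4) = Tmap k (f (SE k 5)) := by rw [← TS5, hf]
lemma fS3 : f (SE k 3) = Tmap k (Tmap k (f (SE k 5))) := by
  rw [← TS4, hf, fS4 f hf]
lemma fS2 : f (SE k 2) = Tmap k (Tmap k (Tmap k (f (SE k 5)))) := by
  rw [← TS3, hf, fS3 f hf]
lemma fS1 : f (SE k 1) = Tmap k (Tmap k (Tmap k (Tmap k (f (SE k 5))))) := by
  rw [← TS2, hf, fS2 f hf]
lemma fS0 : f (SE k 0) = Tmap k (Tmap k (Tmap k (Tmap k (Tmap k (f (SE k 5)))))) := by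
  rw [← TS1, hf, fS1 f hf]
lemma fS8 : f (SE k 8) = Tmap k (f (SE k 9)) := by rw [← TS9, hf]
lemma fS7 : f (SE k 7) = Tmap k (Tmap k (f (SE k 9))) := by
  rw [← TS8, hf, fS8 f hf]
lemma fS6 : f (SE k 6) = Tmap k (Tmap k (Tmap k (f (SE k 9)))) := by
  rw [← TS7, hf, fS7 f hf]
lemma fS10 : f (SE k 10) = Tmap k (f (SE k 11)) := by rw [← TS11, hf]

lemma cb : Tmap k (Tmap k (Tmap k (Tmap k (f (SE k 9))))) = 0 := by
  rw [← hf, TS9, ← hf, TS8, ← hf, TS7, ← hf, TS6, map_zero]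

lemma cd : Tmap k (Tmap k (f (SE k 11))) = 0 := by
  rw [← hf, TS11, ← hf, TS10, map_zero]

lemma hb4 : f (SE k 9) 4 = 0 := congrFun (cb f hf) 0
lemma hb5 : f (SE k 9) 5 = 0 := congrFun (cb f hf) 1
lemma hd2 : f (SE k 11) 2 = 0 := congrFun (cd f hf) 0
lemma hd3 : f (SE k 11) 3 = 0 := congrFun (cd f hf) 1
lemma hd4 : f (SE k 11) 4 = 0 := congrFun (cd f hf) 2
lemma hd5 : f (SE k 11) 5 = 0 := congrFun (cd f hf) 3
lemma hd8 : f (SE k 11) 8 = 0 := congrFun (cd f hf) 6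
lemma hd9 : f (SE k 11) 9 = 0 := congrFun (cd f hf) 7

omit hf in
lemma g₃_eq (c : k) : g₃ k c = c • SE k 3 + (c - 1) • SE k 8 + SE k 11 := rfl

/-- the crucial relations coming from `f (Uc c) ⊆ Uc c'` -/
lemma rel (c c' : k) (hU : ∀ x, x ∈ Uc k c → f x ∈ Uc k c') :
    f (SE k 9) 9 = f (SE k 5) 5 ∧ f (SE k 11) 11 = f (SE k 5) 5 ∧
      c * f (SE k 5) 5 = c' * f (SE k 5) 5 := by
  have e1 : f (g₁ k) = Tmap k (Tmap k (Tmap k (f (SE k 5)))) + Tmap k (Tmap k (f (SE k 9))) := by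
    rw [g₁_eq, map_add, fS2 f hf, fS7 f hf]
  have e2 : f (g₂ k) = Tmap k (f (SE k 11)) - Tmap k (Tmap k (f (SE k 9))) := by
    rw [g₂_eq, map_sub, fS10 f hf, fS7 f hf]
  have e3 : f (g₃ k c) = c • (Tmap k (Tmap k (f (SE k 5)))) + (c - 1) • (Tmap k (f (SE k 9)))
      + f (SE k 11) := by
    rw [g₃_eq, map_add, map_add, map_smul, map_smul, fS3 f hf, fS8 f hf]
  have m1 := (mem_Uc_iff k).1 (hU _ (mem2 k c))
  have m2 := (mem_Uc_iff k).1 (hU _ (mem4 k c))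
  have m3 := (mem_Uc_iff k).1 (hU _ (mem5 k c))
  rw [e1] at m1
  rw [e2] at m2
  rw [e3] at m3
  obtain ⟨-, -, -, -, -, q1⟩ := m1
  obtain ⟨-, -, -, -, -, q2⟩ := m2
  obtain ⟨-, -, -, q3, -, -⟩ := m3
  simp only [Pi.add_apply, Pi.sub_apply, Pi.smul_apply, smul_eq_mul,
    Tc0, Tc1, Tc2, Tc3, Tc4, Tc5, Tc6, Tc7, Tc8, Tc9, Tc10, Tc11] at q1 q2 q3
  have hb4' := hb4 f hf
  have hd3' := hd3 f hf
  have hd8' := hd8 f hf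
  have r1 : f (SE k 9) 9 = f (SE k 5) 5 := by linear_combination hb4' - q1
  have r2 : f (SE k 11) 11 = f (SE k 5) 5 := by
    linear_combination -q2 + r1 - hb4' - hd8' + hd3'
  refine ⟨r1, r2, ?_⟩
  linear_combination q3 - (c-1) * hb4' - hd3' + c' * r2

/-- an idempotent commuting endomorphism preserving `Uc c` whose leading scalar
vanishes is zero -/
lemma kill (c : k) (hU : ∀ x, x ∈ Uc k c → f x ∈ Uc k c)
    (hid : ∀ x, f (f x) = f x) (h5 : f (SE k 5) 5 = 0) : f = 0 := by
  obtain ⟨r1, r2, -⟩ := rel f hf c c hU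
  have hb9 : f (SE k 9) 9 = 0 := by rw [r1, h5]
  have hd11 : f (SE k 11) 11 = 0 := by rw [r2, h5]
  have hb4' := hb4 f hf
  have hb5' := hb5 f hf
  have hd2' := hd2 f hf
  have hd3' := hd3 f hf
  have hd4' := hd4 f hf
  have hd5' := hd5 f hf
  have hd8' := hd8 f hf
  have hd9' := hd9 f hf
  have K0 : f (SE k 0) = 0 := by
    rw [fS0 f hf]; funext j; fin_cases j <;> simp [h5]
  have K1 : f (SE k 1) = 0 := by
    rw [← hid (SE k 1), fS1 f hf, rep f]
    simp [K0, h5]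
  have K6 : f (SE k 6) = 0 := by
    rw [← hid (SE k 6), fS6 f hf, rep f]
    simp [K0, hb4', hb5', hb9]
  have K2 : f (SE k 2) = 0 := by
    rw [← hid (SE k 2), fS2 f hf, rep f]
    simp [K0, K1, K6, h5]
  have K7 : f (SE k 7) = 0 := by
    rw [← hid (SE k 7), fS7 f hf, rep f]
    simp [K0, K1, K6, hb4', hb5', hb9]
  have K10 : f (SE k 10) = 0 := by
    rw [← hid (SE k 10), fS10 f hf, rep f]
    simp [K0, K6, hd2', hd3', hd4', hd5', hd8', hd9', hd11]
  have K3 : f (SE k 3) = 0 := by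
    rw [← hid (SE k 3), fS3 f hf, rep f]
    simp [K0, K1, K2, K6, K7, h5]
  have K8 : f (SE k 8) = 0 := by
    rw [← hid (SE k 8), fS8 f hf, rep f]
    simp [K0, K1, K2, K6, K7, K10, hb4', hb5', hb9]
  have K11 : f (SE k 11) = 0 := by
    rw [← hid (SE k 11), rep f]
    simp [K0, K1, K2, K3, K6, K7, K8, K10, hd2', hd3', hd4', hd5', hd8', hd9', hd11]
  have K4 : f (SE k 4) = 0 := by
    rw [← hid (SE k 4), fS4 f hf, rep f]
    simp [K0, K1, K2, K3, K6, K7, K8, K10, h5]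
  have K9 : f (SE k 9) = 0 := by
    rw [← hid (SE k 9), rep f]
    simp [K0, K1, K2, K3, K4, K6, K7, K8, K10, K11, hb4', hb5', hb9]
  have K5 : f (SE k 5) = 0 := by
    rw [← hid (SE k 5), rep f]
    simp [K0, K1, K2, K3, K4, K6, K7, K8, K9, K10, K11, h5]
  refine LinearMap.pi_ext fun i t => ?_
  rw [hsingle, map_smul]
  fin_cases i <;>
    simp [K0, K1, K2, K3, K4, K5, K6, K7, K8, K9, K10, K11]


lemma fS0vec : f (SE k 0) = (f (SE k 5) 5) • SE k 0 := by
  rw [fS0 f hf]; funext j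
  fin_cases j <;> simp (config := { decide := true }) [SE, Pi.single_apply]

end Endo

lemma Uc_Tinv (c : k) : ∀ x ∈ Uc k c, Tmap k x ∈ Uc k c := by
  intro x hx
  rw [Uc_eq_UK] at hx ⊢
  exact UK_Tinv k hx

lemma SE0_ne : (SE k 0) ≠ 0 := by
  intro h
  have := congrFun h 0
  rw [SE, Pi.single_eq_same] at this
  exact one_ne_zero this

lemma indec (c : k) : IndecTriple k (Uc k c) (Tmap k) := by
  constructor
  · exact ⟨SE k 0, SE0_ne k⟩
  rintro ⟨V₁, V₂, hV₁, hV₂, hcompl, hT₁, hT₂, hUsplit⟩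
  set f : (Fin 12 → k) →ₗ[k] (Fin 12 → k) :=
    V₁.subtype.comp (V₁.linearProjOfIsCompl V₂ hcompl) with hfdef
  have hfmem : ∀ x, f x ∈ V₁ := fun x => (V₁.linearProjOfIsCompl V₂ hcompl x).2
  have hleft : ∀ x ∈ V₁, f x = x := fun x hx =>
    congrArg Subtype.val (Submodule.linearProjOfIsCompl_apply_left hcompl ⟨x, hx⟩)
  have hright : ∀ x ∈ V₂, f x = 0 := fun x hx => by
    show ((V₁.projectionOnto V₂ hcompl x : V₁) : Fin 12 → k) = 0
    simp [Submodule.projectionOnto_apply_of_mem_right hcompl hx]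
  have hid : ∀ x, f (f x) = f x := fun x => hleft _ (hfmem x)
  have hcomm : ∀ v, f (Tmap k v) = Tmap k (f v) := by
    intro v
    obtain ⟨y, z, hyz, -⟩ := Submodule.existsUnique_add_of_isCompl hcompl v
    rw [← hyz]
    simp only [map_add]
    rw [hleft _ y.2, hright _ z.2, hleft _ (hT₁ _ y.2), hright _ (hT₂ _ z.2)]
    simp
  have hU : ∀ x, x ∈ Uc k c → f x ∈ Uc k c := by
    intro x hx
    rw [hUsplit] at hx
    obtain ⟨u, hu, v', hv', rfl⟩ := Submodule.mem_sup.1 hx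
    rw [map_add, hleft _ hu.2, hright _ hv'.2, add_zero]
    exact hu.1
  have hv0 := fS0vec f hcomm
  have hsq : f (SE k 5) 5 * f (SE k 5) 5 = f (SE k 5) 5 := by
    have h := hid (SE k 0)
    rw [hv0, map_smul, hv0] at h
    have h0 := congrFun h 0
    simpa [SE, smul_smul] using h0
  rcases mul_eq_zero.1 (show (f (SE k 5) 5) * (f (SE k 5) 5 - 1) = 0 by
      linear_combination hsq) with h | h
  · have hzero := kill f hcomm c hU hid h
    apply hV₁
    rw [eq_bot_iff]
    intro x hx
    have hx' := hleft x hx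
    rw [hzero] at hx'
    simpa using hx'.symm
  · set gmap : (Fin 12 → k) →ₗ[k] (Fin 12 → k) := LinearMap.id - f with hg
    have hgapp : ∀ x, gmap x = x - f x := fun x => rfl
    have hgcomm : ∀ v, gmap (Tmap k v) = Tmap k (gmap v) := fun v => by
      rw [hgapp, hgapp, hcomm v, map_sub]
    have hgU : ∀ x, x ∈ Uc k c → gmap x ∈ Uc k c := fun x hx => by
      rw [hgapp]; exact sub_mem hx (hU x hx)
    have hgid : ∀ x, gmap (gmap x) = gmap x := fun x => by
      rw [hgapp, hgapp, map_sub, hid x]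
      abel
    have hg5 : gmap (SE k 5) 5 = 0 := by
      rw [hgapp]
      have h1 : (SE k 5) 5 = (1 : k) := by simp [SE]
      simp only [Pi.sub_apply, h1]
      linear_combination -h
    have hzero := kill gmap hgcomm c hgU hgid hg5
    apply hV₂
    rw [eq_bot_iff]
    intro x hx
    have h1 : gmap x = 0 := by rw [hzero]; rfl
    rw [hgapp, hright x hx, sub_zero] at h1
    simpa using h1
  
lemma noniso (c c' : k) (h : TripleIso k (Uc k c) (Tmap k) (Uc k c') (Tmap k)) : c = c' := by
  obtain ⟨e, hcomm, hmap⟩ := h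
  have hf : ∀ v, e.toLinearMap (Tmap k v) = Tmap k (e.toLinearMap v) := hcomm
  have hU : ∀ x, x ∈ Uc k c → e.toLinearMap x ∈ Uc k c' := fun x hx => by
    rw [← hmap]; exact Submodule.mem_map_of_mem hx
  obtain ⟨-, -, r3⟩ := rel e.toLinearMap hf c c' hU
  have ha5 : e.toLinearMap (SE k 5) 5 ≠ 0 := by
    intro h0
    have hv0 := fS0vec e.toLinearMap hf
    rw [h0, zero_smul] at hv0
    have : SE k 0 = 0 := by
      apply e.injective
      simpa using hv0
    exact SE0_ne k this
  exact mul_right_cancel₀ ha5 r3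


/-- The one-parameter family `X_c = (V, U_c, T)`: each `X_c` is an indecomposable object
of `S_k(6)` with dimension pair `(12,6)`, and the `X_c` are pairwise non-isomorphic. -/
theorem stmt15 :
    Tmap k ^ 6 = 0 ∧
    (∀ c : k,
      (∀ x ∈ Uc k c, Tmap k x ∈ Uc k c) ∧
      IndecTriple k (Uc k c) (Tmap k) ∧
      Module.finrank k (Fin 12 → k) = 12 ∧
      Module.finrank k ↥(Uc k c) = 6) ∧
    ∀ c c' : k, TripleIso k (Uc k c) (Tmap k) (Uc k c') (Tmap k) → c = c' := by
  refine ⟨T6 k, fun c => ⟨Uc_Tinv k c, indec k c, ?_, finrank_Uc k c⟩,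
    fun c c' h => noniso k c c' h⟩
  simp [Module.finrank_fin_fun]

end
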